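/- arXiv:1509.08569 — 4 statements merged into one kernel-verified Lean document; each statement's English description precedes it below -/
import Mathlib

section
/- Let u₀ ∈ H¹(ℝ) ∩ W^{1,4}(ℝ) be absolutely continuous and let u be the energy conservative solution of the Novikov equation with initial data u₀. Then on every bounded subset of [0,∞) × ℝ, u is Hölder continuous with exponent 3/4 in both variables t and x: there is a constant C such that |u(t,x) − u(s,y)| ≤ C(|t−s|^{3/4} + |x−y|^{3/4}) for all (t,x), (s,y) in that set. -/
open MeasureTheory Set
open scoped ENNReal

noncomputable section

/-- The kernel `p(x) = (1/2) e^{-|x|}`. -/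
def pker (x : ℝ) : ℝ := (1/2) * Real.exp (-|x|)

/-- The (a.e.) derivative of the kernel `p`. -/
def pker' (x : ℝ) : ℝ := -(1/2) * Real.sign x * Real.exp (-|x|)

/-- `P₁ = p ∗ ((3/2) u u_x² + u³)` (convolution in the space variable). -/
def NvP1 (u ux : ℝ → ℝ → ℝ) (t x : ℝ) : ℝ :=
  ∫ y, pker (x - y) * ((3/2) * u t y * (ux t y)^2 + (u t y)^3)

/-- `∂ₓP₁ = (∂ₓp) ∗ ((3/2) u u_x² + u³)`. -/
def NvdP1 (u ux : ℝ → ℝ → ℝ) (t x : ℝ) : ℝ :=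
  ∫ y, pker' (x - y) * ((3/2) * u t y * (ux t y)^2 + (u t y)^3)

/-- `P₂ = (1/2) p ∗ u_x³`. -/
def NvP2 (ux : ℝ → ℝ → ℝ) (t x : ℝ) : ℝ :=
  (1/2) * ∫ y, pker (x - y) * (ux t y)^3

/-- `∂ₓP₂ = (1/2) (∂ₓp) ∗ u_x³`. -/
def NvdP2 (ux : ℝ → ℝ → ℝ) (t x : ℝ) : ℝ :=
  (1/2) * ∫ y, pker' (x - y) * (ux t y)^3

/-- An energy conservative (weak) solution of the Novikov equation
`u_t + u² u_x + ∂ₓP₁ + P₂ = 0` with initial data `u₀`, with spatial weak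
derivative `ux` and associated family of Radon measures `μ`. -/
structure NovikovConsSol (u₀ : ℝ → ℝ) (u ux : ℝ → ℝ → ℝ) (μ : ℝ → Measure ℝ) : Prop where
  /-- For every `t ≥ 0`, `u(t,·) ∈ H¹(ℝ) ∩ W^{1,4}(ℝ)`: the `L²` and `L⁴` memberships. -/
  mem_L2 : ∀ t, 0 ≤ t → MemLp (u t) 2 volume
  mem_L2x : ∀ t, 0 ≤ t → MemLp (ux t) 2 volume
  mem_L4 : ∀ t, 0 ≤ t → MemLp (u t) 4 volume
  mem_L4x : ∀ t, 0 ≤ t → MemLp (ux t) 4 volume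
  /-- `u(t,·)` is absolutely continuous with derivative `ux(t,·)`. -/
  absCont : ∀ t, 0 ≤ t → ∀ x, u t x = u t 0 + ∫ y in (0:ℝ)..x, ux t y
  /-- `t ↦ u(t,·)` is Lipschitz continuous into `L⁴(ℝ)`. -/
  lipL4 : ∃ L : ℝ, ∀ s t, 0 ≤ s → 0 ≤ t →
    eLpNorm (fun x => u t x - u s x) 4 volume ≤ ENNReal.ofReal (L * |t - s|)
  /-- The initial condition `u(0,·) = u₀`. -/
  init : ∀ x, u 0 x = u₀ x
  /-- The weak form of the equation, tested against every `φ ∈ C¹_c([0,∞)×ℝ)`. -/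
  weakForm : ∀ φ : ℝ × ℝ → ℝ, ContDiff ℝ 1 φ → HasCompactSupport φ →
    (∫ t in Ici (0:ℝ), ∫ x : ℝ,
      (-(ux t x) * (fderiv ℝ φ (t, x) (1, 0) + (u t x)^2 * fderiv ℝ φ (t, x) (0, 1))
        + (-(3/2) * u t x * (ux t x)^2 - (u t x)^3 + NvP1 u ux t x + NvdP2 ux t x)
          * φ (t, x)))
    + (∫ x : ℝ, ux 0 x * φ (0, x)) = 0
  /-- The measures are finite (Radon). -/
  meas_finite : ∀ t, IsFiniteMeasure (μ t)
  /-- `t ↦ μ_t` is continuous for the weak topology of measures. -/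
  meas_cont : ∀ f : BoundedContinuousFunction ℝ ℝ, Continuous fun t => ∫ x, f x ∂(μ t)
  /-- The absolutely continuous part of `μ_t` has density `u_x⁴(t,·)` w.r.t. Lebesgue. -/
  meas_ac : ∀ t, 0 ≤ t →
    (μ t).rnDeriv volume =ᵐ[volume] fun x => ENNReal.ofReal ((ux t x)^4)
  /-- The measure-valued balance law for the energy `u_x⁴`. -/
  measBalance : ∀ φ : ℝ × ℝ → ℝ, ContDiff ℝ 1 φ → HasCompactSupport φ →
    (∫ t in Ici (0:ℝ),
      ((∫ x, (fderiv ℝ φ (t, x) (1, 0) + (u t x)^2 * fderiv ℝ φ (t, x) (0, 1)) ∂(μ t))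
        + ∫ x : ℝ, (4 * (u t x)^3 * (ux t x)^3
            - 4 * (ux t x)^3 * (NvP1 u ux t x + NvdP2 ux t x)) * φ (t, x)))
    - (∫ x : ℝ, (ux 0 x)^4 * φ (0, x)) = 0



private lemma holder14_aux {f : ℝ → ℝ} (hf : MeasureTheory.AEStronglyMeasurable f volume)
    (E : Set ℝ) :
    ∫⁻ z in E, (‖f z‖₊ : ℝ≥0∞) ∂volume ≤
      MeasureTheory.eLpNorm f 4 volume * (volume E) ^ ((3:ℝ)/4) := by
  have h := MeasureTheory.eLpNorm_le_eLpNorm_mul_rpow_measure_univ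
      (μ := volume.restrict E) (p := 1) (q := 4) (by norm_num) hf.restrict
  have he : 1 / (1:ℝ≥0∞).toReal - 1 / (4:ℝ≥0∞).toReal = (3:ℝ)/4 := by norm_num
  rw [MeasureTheory.eLpNorm_one_eq_lintegral_enorm, he, Measure.restrict_apply_univ] at h
  exact h.trans (mul_le_mul_left
    (MeasureTheory.eLpNorm_mono_measure f Measure.restrict_le_self) _)

/-- **Hölder continuity with exponent `3/4` of the conservative solution.**
Let `u₀ ∈ H¹(ℝ) ∩ W^{1,4}(ℝ)` be absolutely continuous and let `u` be the energy
conservative solution of the Novikov equation with initial data `u₀`. Then on every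
bounded subset of `[0,∞) × ℝ` the function `u` is Hölder continuous with exponent
`3/4` in both `t` and `x`: there is a constant `C` with
`|u(t,x) − u(s,y)| ≤ C (|t−s|^{3/4} + |x−y|^{3/4})` on that set. -/
theorem novikov_holder_continuity (u₀ u₀' : ℝ → ℝ)
    (h2 : MemLp u₀ 2 volume) (h2' : MemLp u₀' 2 volume)
    (h4 : MemLp u₀ 4 volume) (h4' : MemLp u₀' 4 volume)
    (hAC : ∀ x, u₀ x = u₀ 0 + ∫ y in (0:ℝ)..x, u₀' y)
    (u ux : ℝ → ℝ → ℝ) (μ : ℝ → Measure ℝ)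
    (hu : NovikovConsSol u₀ u ux μ) :
    ∀ S : Set (ℝ × ℝ), S ⊆ (Ici (0:ℝ)) ×ˢ (univ : Set ℝ) → Bornology.IsBounded S →
      ∃ C : ℝ, ∀ t x s y, (t, x) ∈ S → (s, y) ∈ S →
        |u t x - u s y| ≤ C * (|t - s| ^ ((3:ℝ)/4) + |x - y| ^ ((3:ℝ)/4)) := by
  intro S hS hSb
  obtain ⟨r, hrS⟩ := hSb.subset_closedBall 0
  -- every time in S lies in [0, r]
  have hmemT : ∀ p ∈ S, p.1 ∈ Icc (0:ℝ) r := by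
    intro p hp
    refine ⟨(hS hp).1, ?_⟩
    have h1 : ‖p‖ ≤ r := by
      have := hrS hp
      rwa [Metric.mem_closedBall, dist_zero_right] at this
    exact le_trans (le_abs_self _) (le_trans (norm_fst_le p) h1)
  -- uniform bound on total masses of μ t
  have hc := hu.meas_cont 1
  have hceq : ∀ t : ℝ, ∫ x, (1 : BoundedContinuousFunction ℝ ℝ) x ∂(μ t)
      = (μ t Set.univ).toReal := by
    intro t; simp [measureReal_def]
  obtain ⟨M₀, hM₀⟩ := (isCompact_Icc (a := (0:ℝ)) (b := r)).exists_bound_of_continuousOn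
    hc.continuousOn
  set M := max M₀ 0 with hMdef
  have hM0 : 0 ≤ M := le_max_right _ _
  have hM : ∀ t ∈ Icc (0:ℝ) r, μ t Set.univ ≤ ENNReal.ofReal M := by
    intro t ht
    haveI := hu.meas_finite t
    have h1 := hM₀ t ht
    rw [hceq t, Real.norm_eq_abs, abs_of_nonneg ENNReal.toReal_nonneg] at h1
    calc μ t Set.univ = ENNReal.ofReal ((μ t Set.univ).toReal) :=
          (ENNReal.ofReal_toReal (measure_ne_top _ _)).symm
      _ ≤ ENNReal.ofReal M := ENNReal.ofReal_le_ofReal (h1.trans (le_max_left _ _))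
  set K := M ^ ((1:ℝ)/4) with hKdef
  have hK0 : 0 ≤ K := Real.rpow_nonneg hM0 _
  -- uniform L⁴ bound on ux
  have hNorm : ∀ t ∈ Icc (0:ℝ) r, eLpNorm (ux t) 4 volume ≤ ENNReal.ofReal K := by
    intro t ht
    have heq : ∀ x : ℝ, ((‖ux t x‖₊ : ℝ≥0∞)) ^ (4:ℝ) = ENNReal.ofReal ((ux t x)^4) := by
      intro x
      rw [← enorm_eq_nnnorm, ← ofReal_norm,
        ENNReal.ofReal_rpow_of_nonneg (norm_nonneg _) (by norm_num : (0:ℝ) ≤ 4)]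
      congr 1
      rw [Real.norm_eq_abs, show (4:ℝ) = ((4:ℕ):ℝ) by norm_num, Real.rpow_natCast,
        ← abs_pow, abs_of_nonneg (by positivity)]
    have hlint : ∫⁻ x, (‖ux t x‖₊ : ℝ≥0∞) ^ (4:ℝ) ∂volume ≤ ENNReal.ofReal M := by
      calc ∫⁻ x, (‖ux t x‖₊ : ℝ≥0∞) ^ (4:ℝ) ∂volume
          = ∫⁻ x, ENNReal.ofReal ((ux t x)^4) ∂volume := by simp_rw [heq]
        _ = ∫⁻ x, (μ t).rnDeriv volume x ∂volume :=
            (lintegral_congr_ae (hu.meas_ac t ht.1)).symm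
        _ ≤ μ t Set.univ := Measure.lintegral_rnDeriv_le
        _ ≤ ENNReal.ofReal M := hM t ht
    rw [eLpNorm_eq_lintegral_rpow_enorm_toReal (by norm_num) (by norm_num),
      show ((4:ℝ≥0∞)).toReal = (4:ℝ) by norm_num]
    calc (∫⁻ x, (‖ux t x‖₊ : ℝ≥0∞) ^ (4:ℝ) ∂volume) ^ (1/(4:ℝ))
        ≤ (ENNReal.ofReal M) ^ (1/(4:ℝ)) := ENNReal.rpow_le_rpow hlint (by norm_num)
      _ = ENNReal.ofReal K := ENNReal.ofReal_rpow_of_nonneg hM0 (by norm_num)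
  -- interval integrability of ux t
  have hII : ∀ t, 0 ≤ t → ∀ a b : ℝ, IntervalIntegrable (ux t) volume a b := by
    intro t ht a b
    rw [intervalIntegrable_iff]
    have hEq : uIoc a b = Ioc (min a b) (max a b) := rfl
    haveI : IsFiniteMeasure (volume.restrict (uIoc a b)) := by
      constructor
      rw [Measure.restrict_apply_univ, hEq]
      exact measure_Ioc_lt_top
    exact memLp_one_iff_integrable.mp
      (((hu.mem_L4x t ht).restrict (uIoc a b)).mono_exponent (by norm_num))
  -- spatial Hölder estimate
  have hspat : ∀ t ∈ Icc (0:ℝ) r, ∀ a b : ℝ,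
      |u t a - u t b| ≤ K * |a - b| ^ ((3:ℝ)/4) := by
    intro t ht a b
    have hab : u t a - u t b = ∫ y in b..a, ux t y := by
      rw [hu.absCont t ht.1 a, hu.absCont t ht.1 b, add_sub_add_left_eq_sub]
      exact intervalIntegral.integral_interval_sub_left (hII t ht.1 0 a) (hII t ht.1 0 b)
    have key : ENNReal.ofReal |u t a - u t b|
        ≤ ENNReal.ofReal (K * |a - b| ^ ((3:ℝ)/4)) := by
      rw [hab, ← Real.norm_eq_abs, ofReal_norm, enorm_eq_nnnorm]
      have h1 : (‖∫ y in b..a, ux t y‖₊ : ℝ≥0∞) = (‖∫ y in uIoc b a, ux t y‖₊ : ℝ≥0∞) := by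
        rw [intervalIntegral.intervalIntegral_eq_integral_uIoc]
        split_ifs <;> simp
      rw [h1]
      have hvol : volume (uIoc b a) = ENNReal.ofReal |a - b| := by
        rw [show uIoc b a = Ioc (min b a) (max b a) from rfl,
          Real.volume_Ioc, max_sub_min_eq_abs, abs_sub_comm]
      calc (‖∫ y in uIoc b a, ux t y‖₊ : ℝ≥0∞)
          ≤ ∫⁻ y in uIoc b a, (‖ux t y‖₊ : ℝ≥0∞) ∂volume :=
            enorm_integral_le_lintegral_enorm _
        _ ≤ eLpNorm (ux t) 4 volume * (volume (uIoc b a)) ^ ((3:ℝ)/4) :=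
            holder14_aux (hu.mem_L4x t ht.1).aestronglyMeasurable _
        _ ≤ ENNReal.ofReal K * ENNReal.ofReal (|a - b| ^ ((3:ℝ)/4)) := by
            rw [hvol, ENNReal.ofReal_rpow_of_nonneg (abs_nonneg _) (by norm_num)]
            exact mul_le_mul_left (hNorm t ht) _
        _ = ENNReal.ofReal (K * |a - b| ^ ((3:ℝ)/4)) := (ENNReal.ofReal_mul hK0).symm
    exact (ENNReal.ofReal_le_ofReal_iff (by positivity)).mp key
  -- Lipschitz in L⁴
  obtain ⟨L₀, hL₀⟩ := hu.lipL4
  set L := |L₀| with hLdef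
  have hL0 : 0 ≤ L := abs_nonneg _
  have hLip : ∀ s t : ℝ, 0 ≤ s → 0 ≤ t →
      eLpNorm (fun x => u t x - u s x) 4 volume ≤ ENNReal.ofReal (L * |t - s|) := by
    intro s t hs ht
    exact (hL₀ s t hs ht).trans (ENNReal.ofReal_le_ofReal
      (mul_le_mul_of_nonneg_right (le_abs_self _) (abs_nonneg _)))
  -- temporal Hölder estimate
  have htemp : ∀ t ∈ Icc (0:ℝ) r, ∀ s ∈ Icc (0:ℝ) r, ∀ x : ℝ,
      |u t x - u s x| ≤ (2*K + L) * |t - s| ^ ((3:ℝ)/4) := by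
    intro t ht s hs x
    rcases eq_or_ne t s with rfl | hne
    · simp [Real.zero_rpow (by norm_num : ((3:ℝ)/4) ≠ 0)]
    set h := |t - s| with hh
    have hhpos : 0 < h := abs_pos.mpr (sub_ne_zero.mpr hne)
    set E := Ioc x (x + h) with hE
    have hvolE : volume E = ENNReal.ofReal h := by
      rw [hE, Real.volume_Ioc, add_sub_cancel_left]
    have hut : AEStronglyMeasurable (u t) volume := (hu.mem_L4 t ht.1).aestronglyMeasurable
    have hus : AEStronglyMeasurable (u s) volume := (hu.mem_L4 s hs.1).aestronglyMeasurable
    have hm1 : AEMeasurable (fun z => (‖u t x - u t z‖₊ : ℝ≥0∞)) (volume.restrict E) :=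
      (aestronglyMeasurable_const.sub hut.restrict).enorm
    have hm2 : AEMeasurable (fun z => (‖u t z - u s z‖₊ : ℝ≥0∞)) (volume.restrict E) :=
      ((hut.sub hus).restrict).enorm
    have hm3 : AEMeasurable (fun z => (‖u s z - u s x‖₊ : ℝ≥0∞)) (volume.restrict E) :=
      (hus.restrict.sub aestronglyMeasurable_const).enorm
    have hzle : ∀ z ∈ E, |x - z| ≤ h ∧ |z - x| ≤ h := by
      intro z hz
      rw [hE, mem_Ioc] at hz
      constructor
      · rw [abs_sub_comm, abs_of_nonneg (by linarith)]; linarith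
      · rw [abs_of_nonneg (by linarith)]; linarith
    have term1 : ∫⁻ z in E, (‖u t x - u t z‖₊ : ℝ≥0∞) ∂volume
        ≤ ENNReal.ofReal (K * h ^ ((3:ℝ)/4)) * ENNReal.ofReal h := by
      calc ∫⁻ z in E, (‖u t x - u t z‖₊ : ℝ≥0∞) ∂volume
          ≤ ∫⁻ _ in E, ENNReal.ofReal (K * h ^ ((3:ℝ)/4)) ∂volume := by
            refine setLIntegral_mono' measurableSet_Ioc (fun z hz => ?_)
            rw [← enorm_eq_nnnorm, ← ofReal_norm, Real.norm_eq_abs]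
            refine ENNReal.ofReal_le_ofReal ((hspat t ht x z).trans ?_)
            exact mul_le_mul_of_nonneg_left
              (Real.rpow_le_rpow (abs_nonneg _) (hzle z hz).1 (by norm_num)) hK0
        _ = ENNReal.ofReal (K * h ^ ((3:ℝ)/4)) * ENNReal.ofReal h := by
            rw [setLIntegral_const, hvolE]
    have term3 : ∫⁻ z in E, (‖u s z - u s x‖₊ : ℝ≥0∞) ∂volume
        ≤ ENNReal.ofReal (K * h ^ ((3:ℝ)/4)) * ENNReal.ofReal h := by
      calc ∫⁻ z in E, (‖u s z - u s x‖₊ : ℝ≥0∞) ∂volume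
          ≤ ∫⁻ _ in E, ENNReal.ofReal (K * h ^ ((3:ℝ)/4)) ∂volume := by
            refine setLIntegral_mono' measurableSet_Ioc (fun z hz => ?_)
            rw [← enorm_eq_nnnorm, ← ofReal_norm, Real.norm_eq_abs]
            refine ENNReal.ofReal_le_ofReal ((hspat s hs z x).trans ?_)
            exact mul_le_mul_of_nonneg_left
              (Real.rpow_le_rpow (abs_nonneg _) (hzle z hz).2 (by norm_num)) hK0
        _ = ENNReal.ofReal (K * h ^ ((3:ℝ)/4)) * ENNReal.ofReal h := by
            rw [setLIntegral_const, hvolE]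
    have term2 : ∫⁻ z in E, (‖u t z - u s z‖₊ : ℝ≥0∞) ∂volume
        ≤ ENNReal.ofReal (L * h) * ENNReal.ofReal (h ^ ((3:ℝ)/4)) := by
      calc ∫⁻ z in E, (‖u t z - u s z‖₊ : ℝ≥0∞) ∂volume
          ≤ eLpNorm (fun z => u t z - u s z) 4 volume * (volume E) ^ ((3:ℝ)/4) :=
            holder14_aux (hut.sub hus) E
        _ ≤ ENNReal.ofReal (L * h) * ENNReal.ofReal (h ^ ((3:ℝ)/4)) := by
            rw [hvolE, ENNReal.ofReal_rpow_of_nonneg hhpos.le (by norm_num)]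
            exact mul_le_mul_left (hLip s t hs.1 ht.1) _
    have key : ENNReal.ofReal |u t x - u s x| * ENNReal.ofReal h
        ≤ ENNReal.ofReal ((2*K + L) * h ^ ((3:ℝ)/4)) * ENNReal.ofReal h := by
      calc ENNReal.ofReal |u t x - u s x| * ENNReal.ofReal h
          = ∫⁻ _ in E, ENNReal.ofReal |u t x - u s x| ∂volume := by
            rw [setLIntegral_const, hvolE]
        _ ≤ ∫⁻ z in E, ((‖u t x - u t z‖₊ : ℝ≥0∞) + (‖u t z - u s z‖₊ : ℝ≥0∞)
              + (‖u s z - u s x‖₊ : ℝ≥0∞)) ∂volume := by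
            refine setLIntegral_mono' measurableSet_Ioc (fun z _ => ?_)
            calc ENNReal.ofReal |u t x - u s x|
                ≤ ENNReal.ofReal (|u t x - u t z| + |u t z - u s z| + |u s z - u s x|) := by
                  refine ENNReal.ofReal_le_ofReal ?_
                  rw [show u t x - u s x
                    = (u t x - u t z) + (u t z - u s z) + (u s z - u s x) by ring]
                  exact (abs_add_le _ _).trans (add_le_add_left (abs_add_le _ _) _)
              _ = _ := by
                  rw [ENNReal.ofReal_add (by positivity) (abs_nonneg _),
                    ENNReal.ofReal_add (abs_nonneg _) (abs_nonneg _)]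
                  simp only [← Real.norm_eq_abs, ofReal_norm, enorm_eq_nnnorm]
        _ = (∫⁻ z in E, (‖u t x - u t z‖₊ : ℝ≥0∞) ∂volume)
              + (∫⁻ z in E, (‖u t z - u s z‖₊ : ℝ≥0∞) ∂volume)
              + ∫⁻ z in E, (‖u s z - u s x‖₊ : ℝ≥0∞) ∂volume := by
            rw [lintegral_add_right' _ hm3, lintegral_add_right' _ hm2]
        _ ≤ ENNReal.ofReal (K * h ^ ((3:ℝ)/4)) * ENNReal.ofReal h
              + ENNReal.ofReal (L * h) * ENNReal.ofReal (h ^ ((3:ℝ)/4))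
              + ENNReal.ofReal (K * h ^ ((3:ℝ)/4)) * ENNReal.ofReal h :=
            add_le_add (add_le_add term1 term2) term3
        _ = ENNReal.ofReal ((2*K + L) * h ^ ((3:ℝ)/4)) * ENNReal.ofReal h := by
            rw [← ENNReal.ofReal_mul (by positivity), ← ENNReal.ofReal_mul (by positivity),
              ← ENNReal.ofReal_mul (by positivity),
              ← ENNReal.ofReal_add (by positivity) (by positivity),
              ← ENNReal.ofReal_add (by positivity) (by positivity)]
            congr 1
            ring
    have key2 : ENNReal.ofReal |u t x - u s x|
        ≤ ENNReal.ofReal ((2*K + L) * h ^ ((3:ℝ)/4)) :=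
      (ENNReal.mul_le_mul_iff_left ((ENNReal.ofReal_pos.mpr hhpos).ne') ENNReal.ofReal_ne_top).mp key
    exact (ENNReal.ofReal_le_ofReal_iff (by positivity)).mp key2
  -- assemble
  refine ⟨2*K + L, ?_⟩
  intro t x s y htx hsy
  have ht : t ∈ Icc (0:ℝ) r := hmemT _ htx
  have hs : s ∈ Icc (0:ℝ) r := hmemT _ hsy
  have h1 : |u t x - u s y| ≤ |u t x - u s x| + |u s x - u s y| := abs_sub_le _ _ _
  have h2 := htemp t ht s hs x
  have h3 := hspat s hs x y
  have h4 : 0 ≤ |t - s| ^ ((3:ℝ)/4) := Real.rpow_nonneg (abs_nonneg _) _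
  have h5 : 0 ≤ |x - y| ^ ((3:ℝ)/4) := Real.rpow_nonneg (abs_nonneg _) _
  nlinarith [hK0, hL0]
end
end

section
/- Let u ∈ H¹(ℝ) with weak derivative u' ∈ L⁴(ℝ), and set E := ∫ℝ (u² + u'²) dx and F := ∫ℝ ( u⁴ + 2u²u'² − (1/3)u'⁴ ) dx. Then ‖u'‖⁴_{L⁴(ℝ)} = ∫ℝ u'⁴ dx ≤ 3( 2E² − F ). In particular 2E² − F ≥ 0. -/
open MeasureTheory Set
open scoped ENNReal

noncomputable section

/-- Triangle/Fubini identity: for integrable `g`,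
`(∫ g)² = 2 ∫ t, (∫_{s ≤ t} g) g t`. -/
private lemma triangle_sq (g : ℝ → ℝ) (hg : Integrable g (volume : Measure ℝ)) :
    (∫ t, g t) ^ 2 = 2 * ∫ t, (∫ s in Iic t, g s) * g t := by
  set ν : Measure (ℝ × ℝ) := (volume : Measure ℝ).prod volume with hν
  have hH : Integrable (fun p : ℝ × ℝ => g p.1 * g p.2) ν := hg.mul_prod hg
  have hS : MeasurableSet {p : ℝ × ℝ | p.1 ≤ p.2} := measurableSet_le'
  have hdiagm : MeasurableSet {p : ℝ × ℝ | p.1 = p.2} :=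
    measurableSet_eq_fun measurable_fst measurable_snd
  have hdiag : ν {p : ℝ × ℝ | p.1 = p.2} = 0 := by
    rw [hν, Measure.prod_apply hdiagm]
    have hpre : ∀ x : ℝ, (Prod.mk x ⁻¹' {p : ℝ × ℝ | p.1 = p.2}) = {x} := by
      intro x; ext y; simp [eq_comm]
    simp [hpre]
  have hae : {p : ℝ × ℝ | p.1 < p.2} =ᵐ[ν] {p : ℝ × ℝ | p.1 ≤ p.2} := by
    rw [MeasureTheory.ae_eq_set]
    constructor
    · have h0 : {p : ℝ × ℝ | p.1 < p.2} \ {p : ℝ × ℝ | p.1 ≤ p.2} = ∅ := by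
        ext p; simp only [mem_diff, mem_setOf_eq, mem_empty_iff_false, iff_false, not_and,
          not_not]
        exact fun h => le_of_lt h
      simp [h0]
    · refine measure_mono_null ?_ hdiag
      intro p hp
      simp only [mem_diff, mem_setOf_eq] at hp ⊢
      exact le_antisymm hp.1 (le_of_not_gt hp.2)
  have hswap : (∫ p in {p : ℝ × ℝ | p.2 < p.1}, g p.1 * g p.2 ∂ν)
      = ∫ p in {p : ℝ × ℝ | p.1 < p.2}, g p.1 * g p.2 ∂ν := by
    have h₁ : MeasurePreserving (Prod.swap : ℝ × ℝ → ℝ × ℝ) ν ν :=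
      Measure.measurePreserving_swap
    have h₂ : MeasurableEmbedding (Prod.swap : ℝ × ℝ → ℝ × ℝ) :=
      (MeasurableEquiv.prodComm (α := ℝ) (β := ℝ)).measurableEmbedding
    have h₃ := h₁.setIntegral_preimage_emb h₂ (fun p : ℝ × ℝ => g p.1 * g p.2)
      {p : ℝ × ℝ | p.1 < p.2}
    have hpre : ((Prod.swap : ℝ × ℝ → ℝ × ℝ) ⁻¹' {p : ℝ × ℝ | p.1 < p.2})
        = {p : ℝ × ℝ | p.2 < p.1} := rfl
    rw [hpre] at h₃
    rw [← h₃]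
    simp only [Prod.fst_swap, Prod.snd_swap]
    simp_rw [mul_comm]
  have hsplit : (∫ p, g p.1 * g p.2 ∂ν)
      = 2 * ∫ p in {p : ℝ × ℝ | p.1 ≤ p.2}, g p.1 * g p.2 ∂ν := by
    have hc : ({p : ℝ × ℝ | p.1 ≤ p.2})ᶜ = {p : ℝ × ℝ | p.2 < p.1} := by
      ext p; simp [not_le]
    rw [← integral_add_compl hS hH, hc, hswap, setIntegral_congr_set hae]
    ring
  have hmulint : (∫ p, g p.1 * g p.2 ∂ν) = (∫ t, g t) ^ 2 := by
    rw [hν, integral_prod_mul]; ring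
  have htri : (∫ p in {p : ℝ × ℝ | p.1 ≤ p.2}, g p.1 * g p.2 ∂ν)
      = ∫ t, (∫ s in Iic t, g s) * g t := by
    rw [← integral_indicator hS, hν, integral_prod_symm _ (by
      rw [← hν]; exact hH.indicator hS)]
    refine integral_congr_ae (Filter.Eventually.of_forall fun t => ?_)
    beta_reduce
    have hinner : (fun s => ({p : ℝ × ℝ | p.1 ≤ p.2}).indicator
        (fun p : ℝ × ℝ => g p.1 * g p.2) (s, t))
        = (Iic t).indicator (fun s => g s * g t) := by
      funext s
      by_cases h : s ≤ t <;> simp [Set.indicator, h]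
    rw [hinner, integral_indicator measurableSet_Iic, integral_mul_const]
  rw [← hmulint, hsplit, htri]

/-- Fundamental theorem of calculus for the square of an absolutely
continuous function with locally integrable derivative. -/
private lemma key_ftc (u u' : ℝ → ℝ)
    (hii : ∀ c d : ℝ, IntervalIntegrable u' volume c d)
    (hAC : ∀ x, u x = u 0 + ∫ y in (0:ℝ)..x, u' y) :
    ∀ a b : ℝ, u b ^ 2 - u a ^ 2 = ∫ t in a..b, 2 * u t * u' t := by
  have husub : ∀ c d : ℝ, u d - u c = ∫ t in c..d, u' t := by
    intro c d
    have h := intervalIntegral.integral_add_adjacent_intervals (hii 0 c) (hii c d)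
    rw [hAC d, hAC c]
    linarith [h]
  have main : ∀ a b : ℝ, a ≤ b → u b ^ 2 - u a ^ 2 = ∫ t in a..b, 2 * u t * u' t := by
    intro a b hab
    set J := ∫ t in a..b, u' t with hJ
    set F : ℝ → ℝ := fun t => ∫ s in a..t, u' s with hFdef
    set g : ℝ → ℝ := (Ioc a b).indicator u' with hgdef
    have hgint : Integrable g volume := by
      rw [hgdef, integrable_indicator_iff measurableSet_Ioc]
      exact (intervalIntegrable_iff_integrableOn_Ioc_of_le hab).mp (hii a b)
    have h1 : (∫ t, g t) = J := by
      rw [hgdef, integral_indicator measurableSet_Ioc, hJ,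
        intervalIntegral.integral_of_le hab]
    have h2 : (fun t => (∫ s in Iic t, g s) * g t)
        = (Ioc a b).indicator (fun t => F t * u' t) := by
      funext t
      by_cases ht : t ∈ Ioc a b
      · rw [Set.indicator_of_mem ht]
        have hg_t : g t = u' t := by rw [hgdef]; exact Set.indicator_of_mem ht u'
        rw [hg_t]
        congr 1
        rw [hgdef, setIntegral_indicator measurableSet_Ioc]
        have hset : Iic t ∩ Ioc a b = Ioc a t := by
          ext s
          simp only [mem_inter_iff, mem_Iic, mem_Ioc]
          constructor
          · rintro ⟨h₁, h₂, h₃⟩; exact ⟨h₂, h₁⟩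
          · rintro ⟨h₁, h₂⟩; exact ⟨h₂, h₁, h₂.trans ht.2⟩
        rw [hset, hFdef]
        exact (intervalIntegral.integral_of_le ht.1.le).symm
      · rw [Set.indicator_of_notMem ht]
        have hg_t : g t = 0 := by rw [hgdef]; exact Set.indicator_of_notMem ht u'
        rw [hg_t, mul_zero]
    have htri := triangle_sq g hgint
    rw [h1, h2, integral_indicator measurableSet_Ioc] at htri
    have htri' : J ^ 2 = 2 * ∫ t in a..b, F t * u' t := by
      rw [intervalIntegral.integral_of_le hab]; exact htri
    have hFcont : ContinuousOn F (uIcc a b) :=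
      intervalIntegral.continuousOn_primitive_interval' (hii a b) left_mem_uIcc
    have hint1 : IntervalIntegrable (fun t => 2 * u a * u' t) volume a b :=
      (hii a b).const_mul _
    have hint2 : IntervalIntegrable (fun t => F t * u' t) volume a b :=
      (hii a b).continuousOn_mul hFcont
    have heq : (fun t => 2 * u t * u' t)
        = fun t => 2 * u a * u' t + 2 * (F t * u' t) := by
      funext t
      have hut : u t = u a + F t := by
        have := husub a t
        simp only [hFdef]
        linarith
      rw [hut]; ring
    rw [heq, intervalIntegral.integral_add hint1 (hint2.const_mul 2),
      intervalIntegral.integral_const_mul, intervalIntegral.integral_const_mul]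
    have hub : u b = u a + J := by have := husub a b; rw [hJ]; linarith
    rw [hub]
    nlinarith [htri']
  intro a b
  rcases le_total a b with hab | hba
  · exact main a b hab
  · have h := main b a hba
    rw [intervalIntegral.integral_symm]
    linarith

/-- **`L⁴` control of the derivative by the two energies.**
Let `u ∈ H¹(ℝ)` with weak derivative `u' ∈ L⁴(ℝ)`, and set
`E := ∫ (u² + u'²)` and `F := ∫ (u⁴ + 2u²u'² − (1/3)u'⁴)`. Then
`‖u'‖⁴_{L⁴} = ∫ u'⁴ ≤ 3(2E² − F)`; in particular `2E² − F ≥ 0`. -/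
theorem deriv_L4_control (u u' : ℝ → ℝ)
    (h2 : MemLp u 2 volume) (h2' : MemLp u' 2 volume) (h4' : MemLp u' 4 volume)
    (hAC : ∀ x, u x = u 0 + ∫ y in (0:ℝ)..x, u' y)
    (E F : ℝ)
    (hE : E = ∫ x, ((u x)^2 + (u' x)^2))
    (hF : F = ∫ x, ((u x)^4 + 2 * (u x)^2 * (u' x)^2 - (1/3) * (u' x)^4)) :
    (∫ x, (u' x)^4) ≤ 3 * (2 * E^2 - F) ∧ 0 ≤ 2 * E^2 - F := by
  -- interval integrability of u'
  have hloc : LocallyIntegrable u' volume := h2'.locallyIntegrable one_le_two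
  have hii : ∀ c d : ℝ, IntervalIntegrable u' volume c d := fun c d =>
    (hloc.integrableOn_isCompact isCompact_uIcc).intervalIntegrable
  have hkey := key_ftc u u' hii hAC
  -- basic integrabilities
  have hu2 : Integrable (fun x => u x ^ 2) volume := h2.integrable_sq
  have hu'2 : Integrable (fun x => u' x ^ 2) volume := h2'.integrable_sq
  have hsum : Integrable (fun x => u x ^ 2 + u' x ^ 2) volume := hu2.add hu'2
  have hprod : Integrable (fun x => u x * u' x) volume := by
    have hhalf : (1 : ℝ≥0∞) / 1 = 1 / 2 + 1 / 2 := by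
      rw [ENNReal.div_add_div_same, one_div_one, one_add_one_eq_two,
        ENNReal.div_self (by norm_num) (by norm_num)]
    have : ENNReal.HolderTriple 2 2 1 := ⟨by simpa [one_div] using hhalf.symm⟩
    have h : MemLp (fun x => u x • u' x) 1 volume := h2'.smul (𝕜 := ℝ) h2
    rw [← memLp_one_iff_integrable]
    simpa [Pi.smul_apply, smul_eq_mul] using h
  have habs : Integrable (fun x => |2 * u x * u' x|) volume := by
    have : Integrable (fun x => 2 * (u x * u' x)) volume := hprod.const_mul 2
    have h2' : Integrable (fun x => 2 * u x * u' x) volume := by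
      simpa [mul_assoc] using this
    exact h2'.abs
  -- pointwise bound |2uu'| ≤ u² + u'²
  have hptw : ∀ x, |2 * u x * u' x| ≤ u x ^ 2 + u' x ^ 2 := by
    intro x
    have h1 : |2 * u x * u' x| = 2 * |u x| * |u' x| := by
      rw [abs_mul, abs_mul]; simp [abs_of_nonneg]
    rw [h1]
    nlinarith [sq_nonneg (|u x| - |u' x|), sq_abs (u x), sq_abs (u' x)]
  have hEabs : (∫ x, |2 * u x * u' x|) ≤ E := by
    rw [hE]
    exact integral_mono habs hsum hptw
  have hEnn : 0 ≤ E := by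
    rw [hE]
    exact integral_nonneg fun x => by positivity
  -- E bounds the sup of u²
  have hbound : ∀ x y : ℝ, u x ^ 2 ≤ u y ^ 2 + E := by
    intro x y
    have hk := hkey y x
    have hn : |∫ t in y..x, 2 * u t * u' t| ≤ ∫ t, |2 * u t * u' t| := by
      calc |∫ t in y..x, 2 * u t * u' t|
          ≤ ∫ t in uIoc y x, |2 * u t * u' t| := by
            have h := intervalIntegral.norm_integral_le_integral_norm_uIoc
              (f := fun t => 2 * u t * u' t) (a := y) (b := x) (μ := volume)
            simp only [Real.norm_eq_abs] at h
            exact h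
        _ ≤ ∫ t, |2 * u t * u' t| :=
            setIntegral_le_integral habs
              (Filter.Eventually.of_forall fun t => abs_nonneg _)
    have := abs_le.mp (le_trans hn hEabs : |∫ t in y..x, 2 * u t * u' t| ≤ E)
    linarith [this.2]
  have hsupE : ∀ x, u x ^ 2 ≤ E := by
    intro x
    by_contra hx
    push_neg at hx
    have hlow : ∀ y, u x ^ 2 - E ≤ u y ^ 2 := fun y => by linarith [hbound x y]
    have h1 : (ENNReal.ofReal (u x ^ 2 - E)) * volume (univ : Set ℝ)
        ≤ ∫⁻ y, ENNReal.ofReal (u y ^ 2) := by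
      rw [← lintegral_const]
      exact lintegral_mono fun y => ENNReal.ofReal_le_ofReal (hlow y)
    have h2'' : (∫⁻ y, ENNReal.ofReal (u y ^ 2)) < ⊤ := hu2.lintegral_lt_top
    rw [Real.volume_univ, ENNReal.mul_top (by
      simp only [ne_eq, ENNReal.ofReal_eq_zero, not_le]
      linarith)] at h1
    exact h2''.ne (top_le_iff.mp h1)
  -- integrability of the quartic terms
  have hu4 : Integrable (fun x => u x ^ 4) volume := by
    refine Integrable.mono' (hu2.const_mul E)
      ((h2.aestronglyMeasurable.aemeasurable.pow_const 4).aestronglyMeasurable)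
      (Filter.Eventually.of_forall fun x => ?_)
    have h0 : ‖u x ^ 4‖ = u x ^ 4 := by
      rw [Real.norm_eq_abs]; exact abs_of_nonneg (by positivity)
    rw [h0]
    nlinarith [hsupE x, sq_nonneg (u x)]
  have hmix : Integrable (fun x => u x ^ 2 * u' x ^ 2) volume := by
    refine Integrable.mono' (hu'2.const_mul E)
      (((h2.aestronglyMeasurable.aemeasurable.pow_const 2).mul
        (h2'.aestronglyMeasurable.aemeasurable.pow_const 2)).aestronglyMeasurable)
      (Filter.Eventually.of_forall fun x => ?_)
    have h0 : ‖u x ^ 2 * u' x ^ 2‖ = u x ^ 2 * u' x ^ 2 := by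
      rw [Real.norm_eq_abs]; exact abs_of_nonneg (by positivity)
    rw [h0]
    nlinarith [hsupE x, sq_nonneg (u' x)]
  have hu'4 : Integrable (fun x => u' x ^ 4) volume := by
    have hhalf : (1 : ℝ≥0∞) / 2 = 1 / 4 + 1 / 4 := by
      rw [ENNReal.div_add_div_same]
      rw [show (1 : ℝ≥0∞) + 1 = 2 from one_add_one_eq_two]
      rw [ENNReal.div_eq_div_iff (by norm_num) (by norm_num) (by norm_num) (by norm_num)]
      norm_num
    have hm2 : MemLp (fun x => u' x * u' x) 2 volume := by
      have : ENNReal.HolderTriple 4 4 2 := ⟨by simpa [one_div] using hhalf.symm⟩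
      have h : MemLp (fun x => u' x • u' x) 2 volume := h4'.smul (𝕜 := ℝ) h4'
      simpa [Pi.smul_apply, smul_eq_mul] using h
    have h := hm2.integrable_sq
    convert h using 1
    funext x; ring
  -- split the integrals
  have hEeq : E = (∫ x, u x ^ 2) + ∫ x, u' x ^ 2 := by
    rw [hE, integral_add hu2 hu'2]
  have hFeq : F = (∫ x, u x ^ 4) + 2 * (∫ x, u x ^ 2 * u' x ^ 2)
      - (1/3) * ∫ x, u' x ^ 4 := by
    rw [hF]
    have hre : (fun x => u x ^ 4 + 2 * u x ^ 2 * u' x ^ 2 - 1 / 3 * u' x ^ 4)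
        = fun x => (u x ^ 4 + 2 * (u x ^ 2 * u' x ^ 2)) - (1/3) * u' x ^ 4 := by
      funext x; ring
    have hadd : Integrable (fun x => u x ^ 4 + 2 * (u x ^ 2 * u' x ^ 2)) volume :=
      hu4.add (hmix.const_mul 2)
    have hc3 : Integrable (fun x => (1/3 : ℝ) * u' x ^ 4) volume := hu'4.const_mul (1/3)
    have hc2 : Integrable (fun x => (2 : ℝ) * (u x ^ 2 * u' x ^ 2)) volume :=
      hmix.const_mul 2
    rw [hre, integral_sub hadd hc3, integral_add hu4 hc2,
      integral_const_mul, integral_const_mul]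
  -- comparisons
  have hA1 : (∫ x, u x ^ 4) ≤ E * ∫ x, u x ^ 2 := by
    calc (∫ x, u x ^ 4) ≤ ∫ x, E * u x ^ 2 :=
          integral_mono hu4 (hu2.const_mul E) fun x => by
            nlinarith [hsupE x, sq_nonneg (u x)]
      _ = E * ∫ x, u x ^ 2 := integral_const_mul E _
  have hA2 : (∫ x, u x ^ 2 * u' x ^ 2) ≤ E * ∫ x, u' x ^ 2 := by
    calc (∫ x, u x ^ 2 * u' x ^ 2) ≤ ∫ x, E * u' x ^ 2 :=
          integral_mono hmix (hu'2.const_mul E) fun x => by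
            nlinarith [hsupE x, sq_nonneg (u' x)]
      _ = E * ∫ x, u' x ^ 2 := integral_const_mul E _
  have hI2nn : 0 ≤ ∫ x, u x ^ 2 := integral_nonneg fun x => by positivity
  have hI2'nn : 0 ≤ ∫ x, u' x ^ 2 := integral_nonneg fun x => by positivity
  have hI4'nn : 0 ≤ ∫ x, u' x ^ 4 := integral_nonneg fun x => by positivity
  have hEsq : E ^ 2 = E * (∫ x, u x ^ 2) + E * ∫ x, u' x ^ 2 := by
    rw [hEeq]; ring
  have hEI2 : 0 ≤ E * ∫ x, u x ^ 2 := mul_nonneg hEnn hI2nn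
  have hEI2' : 0 ≤ E * ∫ x, u' x ^ 2 := mul_nonneg hEnn hI2'nn
  constructor
  · linarith [hA1, hA2, hEsq, hEI2, hEI2', hI4'nn, hFeq]
  · linarith [hA1, hA2, hEsq, hEI2, hEI2', hI4'nn, hFeq]
end
end

section
/- Let u ∈ H¹(ℝ) with weak derivative u' ∈ L⁴(ℝ), and set E := ∫ℝ (u² + u'²) dx and F := ∫ℝ ( u⁴ + 2u²u'² − (1/3)u'⁴ ) dx. Then ‖u'‖³_{L³(ℝ)} = ∫ℝ |u'|³ dx ≤ √( 3E(2E² − F) ). -/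
open MeasureTheory Set
open scoped ENNReal NNReal

noncomputable section

lemma fubini_half {f : ℝ → ℝ} {y x : ℝ} (hyx : y ≤ x)
    (hf : IntegrableOn f (Ioc y x)) :
    ∫ t in Ioc y x, (∫ s in Ioc y t, f s) * f t
      = (∫ s in Ioc y x, f s) ^ 2 / 2 := by
  set ν := volume.restrict (Ioc y x) with hν
  set w := ∫ s in Ioc y x, f s with hw
  set I := ∫ t in Ioc y x, (∫ s in Ioc y t, f s) * f t with hI
  set I₂ := ∫ t in Ioc y x, (∫ s in Ioc t x, f s) * f t with hI₂
  set H : ℝ → ℝ → ℝ := fun t s => (Ioc t x).indicator f s * f t with hH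
  have hS : MeasurableSet {p : ℝ × ℝ | p.1 < p.2 ∧ p.2 ≤ x} :=
    (measurableSet_lt measurable_fst measurable_snd).inter
      (measurableSet_le measurable_snd measurable_const)
  have hHuncurry : Function.uncurry H =
      Set.indicator {p : ℝ × ℝ | p.1 < p.2 ∧ p.2 ≤ x} (fun p => f p.2 * f p.1) := by
    funext p
    rcases p with ⟨t, s⟩
    simp only [Function.uncurry, hH, Set.indicator, Set.mem_Ioc, Set.mem_setOf_eq]
    by_cases h : t < s ∧ s ≤ x <;> simp [h]
  have hHint : Integrable (Function.uncurry H) (ν.prod ν) := by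
    rw [hHuncurry]
    have h1 : Integrable (fun p : ℝ × ℝ => f p.2 * f p.1) (ν.prod ν) := by
      have := Integrable.mul_prod hf hf
      simpa [mul_comm] using this
    exact h1.indicator hS
  -- inner integral identification for I₂
  have hinner : ∀ᵐ t ∂ν, (∫ s in Ioc t x, f s) * f t = ∫ s, H t s ∂ν := by
    filter_upwards [ae_restrict_mem measurableSet_Ioc] with t ht
    have hsub : Ioc t x ∩ Ioc y x = Ioc t x :=
      inter_eq_left.mpr (Ioc_subset_Ioc_left (le_of_lt ht.1))
    rw [hH]
    simp only
    rw [MeasureTheory.integral_mul_const, integral_indicator measurableSet_Ioc,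
      hν, Measure.restrict_restrict measurableSet_Ioc, hsub]
  have hI₂eq : I₂ = ∫ t, (∫ s, H t s ∂ν) ∂ν := integral_congr_ae hinner
  -- swap
  have hswap : (∫ t, (∫ s, H t s ∂ν) ∂ν) = ∫ s, (∫ t, H t s ∂ν) ∂ν :=
    integral_integral_swap hHint
  -- identify swapped inner integral
  have hinner2 : ∀ᵐ s ∂ν, (∫ t, H t s ∂ν) = (∫ t in Ioc y s, f t) * f s := by
    filter_upwards [ae_restrict_mem measurableSet_Ioc] with s hs
    have hfun : (fun t => H t s) = (Iio s).indicator (fun t => f s * f t) := by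
      funext t
      simp only [hH, Set.indicator, Set.mem_Ioc, Set.mem_Iio]
      by_cases h : t < s
      · simp [h, hs.2]
      · simp [h]
    have hset : Iio s ∩ Ioc y x = Ioo y s := by
      ext t
      simp only [Set.mem_inter_iff, Set.mem_Iio, Set.mem_Ioc, Set.mem_Ioo]
      constructor
      · rintro ⟨h1, h2, h3⟩; exact ⟨h2, h1⟩
      · rintro ⟨h1, h2⟩; exact ⟨h2, h1, le_trans (le_of_lt h2) hs.2⟩
    rw [hfun, integral_indicator measurableSet_Iio, hν,
      Measure.restrict_restrict measurableSet_Iio, hset,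
      integral_const_mul, ← integral_Ioc_eq_integral_Ioo, mul_comm]
  have hI₂I : I₂ = I := by
    rw [hI₂eq, hswap, hI]
    exact integral_congr_ae hinner2
  -- split the inner integral of I
  have hsplit : ∀ t ∈ Ioc y x, (∫ s in Ioc y t, f s) = w - ∫ s in Ioc t x, f s := by
    intro t ht
    have hunion : Ioc y t ∪ Ioc t x = Ioc y x := Ioc_union_Ioc_eq_Ioc (le_of_lt ht.1) ht.2
    have hdisj : Disjoint (Ioc y t) (Ioc t x) := by
      rw [Set.disjoint_left]; rintro s ⟨_, h1⟩ ⟨h2, _⟩; linarith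
    have h1 : IntegrableOn f (Ioc y t) volume := hf.mono_set (Ioc_subset_Ioc le_rfl ht.2)
    have h2 : IntegrableOn f (Ioc t x) volume := hf.mono_set (Ioc_subset_Ioc_left (le_of_lt ht.1))
    have := setIntegral_union hdisj measurableSet_Ioc h1 h2
    rw [hunion] at this
    rw [hw, this]; ring
  have hg_int : Integrable (fun t => (∫ s in Ioc t x, f s) * f t) ν :=
    (hHint.integral_prod_left).congr (hinner.mono fun t ht => ht.symm)
  have hIeq : I = w * w - I₂ := by
    have hcongr : I = ∫ t in Ioc y x, (w * f t - (∫ s in Ioc t x, f s) * f t) := by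
      rw [hI]
      refine integral_congr_ae ?_
      filter_upwards [ae_restrict_mem measurableSet_Ioc] with t ht
      rw [hsplit t ht]; ring
    rw [hcongr, integral_sub ((hf.const_mul w)) hg_int, integral_const_mul, ← hw,
      ← hI₂]
  have h2I : I = w * w - I := by
    calc I = w * w - I₂ := hIeq
    _ = w * w - I := by rw [hI₂I]
  show I = w ^ 2 / 2
  rw [pow_two]
  linarith




/-- **`L³` control of the derivative by the two energies.**
Let `u ∈ H¹(ℝ)` with weak derivative `u' ∈ L⁴(ℝ)`, and set
`E := ∫ (u² + u'²)` and `F := ∫ (u⁴ + 2u²u'² − (1/3)u'⁴)`. Then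
`‖u'‖³_{L³} = ∫ |u'|³ ≤ √(3E(2E² − F))`. -/
theorem deriv_L3_control (u u' : ℝ → ℝ)
    (h2 : MemLp u 2 volume) (h2' : MemLp u' 2 volume) (h4' : MemLp u' 4 volume)
    (hAC : ∀ x, u x = u 0 + ∫ y in (0:ℝ)..x, u' y)
    (E F : ℝ)
    (hE : E = ∫ x, ((u x)^2 + (u' x)^2))
    (hF : F = ∫ x, ((u x)^4 + 2 * (u x)^2 * (u' x)^2 - (1/3) * (u' x)^4)) :
    (∫ x, |u' x|^3) ≤ Real.sqrt (3 * E * (2 * E^2 - F)) := by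
  have hmeas' : AEStronglyMeasurable u' volume := h2'.1
  have hIOn : ∀ a b : ℝ, IntegrableOn u' (Ioc a b) volume := by
    intro a b
    haveI : IsFiniteMeasure (volume.restrict (Ioc a b)) :=
      ⟨by rw [Measure.restrict_apply_univ]; exact measure_Ioc_lt_top⟩
    exact (h2'.restrict (Ioc a b)).integrable one_le_two
  have hii : ∀ a b : ℝ, IntervalIntegrable u' volume a b := fun a b => ⟨hIOn a b, hIOn b a⟩
  have hu_cont : Continuous u := by
    have hrw : u = fun x => u 0 + ∫ t in (0:ℝ)..x, u' t := funext hAC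
    rw [hrw]
    exact continuous_const.add (intervalIntegral.continuous_primitive hii 0)
  have hum : AEStronglyMeasurable u volume := hu_cont.aestronglyMeasurable
  have iu2 : Integrable (fun x => u x ^ 2) volume := h2.integrable_sq
  have iu'2 : Integrable (fun x => u' x ^ 2) volume := h2'.integrable_sq
  have rpow4 : ∀ a : ℝ, 0 ≤ a → a ^ (4:ℝ) = a ^ (4:ℕ) := fun a _ => by
    rw [show (4:ℝ) = ((4:ℕ):ℝ) by norm_num, Real.rpow_natCast]
  have iu'4 : Integrable (fun x => u' x ^ 4) volume := by
    have h1 := h4'.norm_rpow (by norm_num) (by norm_num)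
    rw [memLp_one_iff_integrable] at h1
    have heq : (fun x => ‖u' x‖ ^ (4:ℝ≥0∞).toReal) = fun x => u' x ^ 4 := by
      funext z
      have : ((4:ℝ≥0∞)).toReal = (4:ℝ) := by norm_num
      rw [this, rpow4 _ (norm_nonneg _), Real.norm_eq_abs, ← abs_pow,
        abs_of_nonneg (by positivity)]
    rwa [heq] at h1
  -- key identity  (uses fubini_half)
  have key : ∀ y z : ℝ, y ≤ z → u z ^ 2 - u y ^ 2 = 2 * ∫ t in Ioc y z, u t * u' t := by
    intro y z hyz
    set W : ℝ → ℝ := fun t => ∫ s in y..t, u' s with hWdef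
    have hWc : Continuous W := intervalIntegral.continuous_primitive hii y
    have hWV : ∀ t, y ≤ t → W t = ∫ s in Ioc y t, u' s := fun t ht =>
      intervalIntegral.integral_of_le ht
    have huW : ∀ t, y ≤ t → u t = u y + W t := by
      intro t ht
      have hsub := intervalIntegral.integral_interval_sub_left (hii 0 t) (hii 0 y)
      rw [hAC t, hAC y, hWdef]
      simp only
      rw [← hsub]; ring
    have hfub := fubini_half hyz (hIOn y z)
    have hMint : Integrable (fun t => |u' t|) (volume.restrict (Ioc y z)) := (hIOn y z).abs
    have hint1 : Integrable (fun t => u y * u' t) (volume.restrict (Ioc y z)) :=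
      (hIOn y z).const_mul _
    have hint2 : Integrable (fun t => (∫ s in Ioc y t, u' s) * u' t)
        (volume.restrict (Ioc y z)) := by
      refine Integrable.mono' (hMint.const_mul (∫ s in Ioc y z, |u' s|)) ?_ ?_
      · have hW' : AEStronglyMeasurable (fun t => (∫ s in Ioc y t, u' s))
            (volume.restrict (Ioc y z)) := by
          refine AEStronglyMeasurable.congr hWc.aestronglyMeasurable.restrict ?_
          filter_upwards [ae_restrict_mem measurableSet_Ioc] with t ht
          exact hWV t (le_of_lt ht.1)
        exact hW'.mul hmeas'.restrict
      · filter_upwards [ae_restrict_mem measurableSet_Ioc] with t ht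
        have h1 : |∫ s in Ioc y t, u' s| ≤ ∫ s in Ioc y t, |u' s| := by
          simpa [Real.norm_eq_abs] using
            norm_integral_le_integral_norm (μ := volume.restrict (Ioc y t)) u'
        have h2 : ∫ s in Ioc y t, |u' s| ≤ ∫ s in Ioc y z, |u' s| := by
          refine setIntegral_mono_set (hIOn y z).abs ?_ ?_
          · exact ae_of_all _ fun s => abs_nonneg _
          · exact HasSubset.Subset.eventuallyLE (Ioc_subset_Ioc le_rfl ht.2)
        rw [Real.norm_eq_abs, abs_mul]
        have h3 : (0:ℝ) ≤ |u' t| := abs_nonneg _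
        calc |∫ s in Ioc y t, u' s| * |u' t| ≤ (∫ s in Ioc y z, |u' s|) * |u' t| := by
              apply mul_le_mul_of_nonneg_right _ h3
              exact le_trans h1 h2
        _ = (∫ s in Ioc y z, |u' s|) * |u' t| := rfl
    have hcongr : (∫ t in Ioc y z, u t * u' t)
        = ∫ t in Ioc y z, (u y * u' t + (∫ s in Ioc y t, u' s) * u' t) := by
      refine integral_congr_ae ?_
      filter_upwards [ae_restrict_mem measurableSet_Ioc] with t ht
      rw [huW t (le_of_lt ht.1), hWV t (le_of_lt ht.1)]; ring
    have hvalue : (∫ t in Ioc y z, u t * u' t)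
        = u y * (∫ s in Ioc y z, u' s) + (∫ s in Ioc y z, u' s) ^ 2 / 2 := by
      rw [hcongr, integral_add hint1 hint2, integral_const_mul, hfub]
    rw [hvalue, huW z hyz, hWV z hyz]
    ring
  -- integrable |u u'| and u u'
  have iuu'abs : Integrable (fun t => |u t * u' t|) volume := by
    refine Integrable.mono' ((iu2.add iu'2).const_mul (1/2)) ?_ ?_
    · exact (hum.mul hmeas').norm
    · refine ae_of_all _ fun t => ?_
      simp only [Pi.add_apply]
      rw [Real.norm_eq_abs, abs_abs, abs_mul]
      nlinarith [sq_nonneg (|u t| - |u' t|), sq_abs (u t), sq_abs (u' t),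
        abs_nonneg (u t), abs_nonneg (u' t)]
  have iuu' : Integrable (fun t => u t * u' t) volume := by
    refine Integrable.mono' iuu'abs (hum.mul hmeas') ?_
    exact ae_of_all _ fun t => by rw [Real.norm_eq_abs]
  set A := ∫ t, u t ^ 2 with hA
  set B := ∫ t, u' t ^ 2 with hB
  set C := ∫ t, |u t * u' t| with hCdef
  have hA0 : 0 ≤ A := integral_nonneg fun t => sq_nonneg _
  have hB0 : 0 ≤ B := integral_nonneg fun t => sq_nonneg _
  have hC0 : 0 ≤ C := integral_nonneg fun t => abs_nonneg _
  have hE' : E = A + B := by rw [hE]; exact integral_add iu2 iu'2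
  have hC2 : 2 * C ≤ A + B := by
    have h1 : (∫ t, 2 * |u t * u' t|) ≤ ∫ t, (u t ^ 2 + u' t ^ 2) := by
      refine integral_mono (iuu'abs.const_mul 2) (iu2.add iu'2) fun t => ?_
      simp only [Pi.add_apply]
      rw [abs_mul]
      nlinarith [sq_nonneg (|u t| - |u' t|), sq_abs (u t), sq_abs (u' t),
        abs_nonneg (u t), abs_nonneg (u' t)]
    rw [integral_const_mul, integral_add iu2 iu'2] at h1
    exact h1
  -- sup bound
  have hsup : ∀ z, u z ^ 2 ≤ 2 * C := by
    intro z
    have step : ∀ y, y ≤ z → u z ^ 2 ≤ u y ^ 2 + 2 * C := by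
      intro y hy
      have hkey := key y z hy
      have h1 : (∫ t in Ioc y z, u t * u' t) ≤ ∫ t in Ioc y z, |u t * u' t| :=
        integral_mono iuu'.integrableOn iuu'abs.integrableOn fun t => le_abs_self _
      have h2 : (∫ t in Ioc y z, |u t * u' t|) ≤ C :=
        setIntegral_le_integral iuu'abs (ae_of_all _ fun t => abs_nonneg _)
      nlinarith
    have havg : ∀ L : ℝ, 0 < L → u z ^ 2 * L ≤ A + 2 * C * L := by
      intro L hL
      have hconst : IntegrableOn (fun _ : ℝ => u z ^ 2) (Ioc (z - L) z) volume :=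
        integrableOn_const measure_Ioc_lt_top.ne
      have hconst2 : IntegrableOn (fun _ : ℝ => 2 * C) (Ioc (z - L) z) volume :=
        integrableOn_const measure_Ioc_lt_top.ne
      have hg : IntegrableOn (fun y => u y ^ 2 + 2 * C) (Ioc (z - L) z) volume :=
        iu2.integrableOn.add hconst2
      have hmono := setIntegral_mono_on hconst hg measurableSet_Ioc
        (fun y hy => step y hy.2)
      have hvol : (volume (Ioc (z - L) z)).toReal = L := by
        rw [Real.volume_Ioc]
        rw [show z - (z - L) = L by ring, ENNReal.toReal_ofReal hL.le]
      have hlhs : (∫ _ in Ioc (z - L) z, u z ^ 2) = L * u z ^ 2 := by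
        rw [setIntegral_const, measureReal_def, hvol, smul_eq_mul]
      have hrhs : (∫ y in Ioc (z - L) z, (u y ^ 2 + 2 * C))
          ≤ A + L * (2 * C) := by
        rw [integral_add iu2.integrableOn hconst2]
        have hle : (∫ y in Ioc (z - L) z, u y ^ 2) ≤ A :=
          setIntegral_le_integral iu2 (ae_of_all _ fun t => sq_nonneg _)
        rw [setIntegral_const, measureReal_def, hvol, smul_eq_mul]
        linarith
      rw [hlhs] at hmono
      nlinarith [le_trans hmono hrhs]
    by_contra hcon
    push_neg at hcon
    have hε : 0 < u z ^ 2 - 2 * C := by linarith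
    set L := (A + 1) / (u z ^ 2 - 2 * C) with hL
    have hLpos : 0 < L := by positivity
    have h1 := havg L hLpos
    have h2 : (u z ^ 2 - 2 * C) * L = A + 1 := by
      rw [hL]; field_simp
    nlinarith
  have hE0 : 0 ≤ E := by
    have := hsup 0
    have := sq_nonneg (u 0)
    linarith [hC0]
  have hsupE : ∀ z, u z ^ 2 ≤ E := fun z => by
    have := hsup z; rw [hE']; linarith [hC2]
  -- integrability of u^4 and u^2 u'^2
  have iu4 : Integrable (fun t => u t ^ 4) volume := by
    refine Integrable.mono' (iu2.const_mul E) (hu_cont.pow 4).aestronglyMeasurable ?_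
    refine ae_of_all _ fun t => ?_
    rw [Real.norm_eq_abs, abs_of_nonneg (by positivity)]
    nlinarith [hsupE t, sq_nonneg (u t)]
  have iu2u'2 : Integrable (fun t => u t ^ 2 * u' t ^ 2) volume := by
    refine Integrable.mono' (iu'2.const_mul E) ?_ ?_
    · exact ((hu_cont.pow 2).aestronglyMeasurable.aemeasurable.mul
        (hmeas'.aemeasurable.pow_const 2)).aestronglyMeasurable
    · refine ae_of_all _ fun t => ?_
      rw [Real.norm_eq_abs, abs_of_nonneg (by positivity)]
      nlinarith [hsupE t, sq_nonneg (u t), sq_nonneg (u' t)]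
  -- split F
  set D := ∫ t, u' t ^ 4 with hD
  set P1 := ∫ t, u t ^ 4 with hP1
  set P2 := ∫ t, u t ^ 2 * u' t ^ 2 with hP2M
  have hD0 : 0 ≤ D := integral_nonneg fun t => by positivity
  have hFsplit : F = P1 + 2 * P2 - (1/3) * D := by
    rw [hF]
    have : (fun x => (u x)^4 + 2 * (u x)^2 * (u' x)^2 - (1/3) * (u' x)^4)
        = fun x => (u x ^ 4 + 2 * (u x ^ 2 * u' x ^ 2)) - (1/3) * u' x ^ 4 := by
      funext x; ring
    have i1 : Integrable (fun x => u x ^ 4 + 2 * (u x ^ 2 * u' x ^ 2)) volume := by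
      exact iu4.add (iu2u'2.const_mul 2)
    have i2 : Integrable (fun x => (1/3 : ℝ) * u' x ^ 4) volume := iu'4.const_mul (1/3)
    rw [this, integral_sub i1 i2,
      integral_add iu4 (iu2u'2.const_mul 2), integral_const_mul, integral_const_mul]
  have hP1le : P1 ≤ E * A := by
    have h := integral_mono iu4 (iu2.const_mul E) fun t => by
      simp only
      nlinarith [hsupE t, sq_nonneg (u t)]
    rwa [integral_const_mul] at h
  have hP2le : P2 ≤ E * B := by
    have h := integral_mono iu2u'2 (iu'2.const_mul E) fun t => by
      simp only
      nlinarith [hsupE t, sq_nonneg (u' t)]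
    rwa [integral_const_mul] at h
  have hP : P1 + 2 * P2 ≤ 2 * E ^ 2 := by
    have hEA : 0 ≤ E * A := mul_nonneg hE0 hA0
    have hEB : 0 ≤ E * B := mul_nonneg hE0 hB0
    have hsq : 2 * E ^ 2 = 2 * (E * A) + 2 * (E * B) := by rw [hE']; ring
    rw [hsq]; linarith
  have hDle : D ≤ 3 * (2 * E ^ 2 - F) := by rw [hFsplit]; linarith
  -- Hölder
  have conj : Real.HolderConjugate 2 2 := Real.HolderConjugate.two_two
  have hofReal : ENNReal.ofReal (2:ℝ) = 2 := by
    rw [show (2:ℝ) = ((2:ℕ):ℝ) by norm_num, ENNReal.ofReal_natCast]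
    norm_num
  have hmf : MemLp (fun t => |u' t|) (ENNReal.ofReal 2) volume := by
    rw [hofReal]
    have := h2'.norm
    simpa [Real.norm_eq_abs] using this
  have hmg : MemLp (fun t => u' t ^ 2) (ENNReal.ofReal 2) volume := by
    rw [hofReal]
    have h1 := h4'.norm_rpow_div 2
    have h42 : (4:ℝ≥0∞) / 2 = 2 := by
      rw [show (4:ℝ≥0∞) = 2 * 2 by norm_num, mul_div_assoc,
        ENNReal.mul_div_cancel' (by norm_num) (by norm_num)]
    rw [h42] at h1
    have heq : (fun x => ‖u' x‖ ^ (2:ℝ≥0∞).toReal) = fun x => u' x ^ 2 := by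
      funext z
      have ht : ((2:ℝ≥0∞)).toReal = (2:ℝ) := by norm_num
      rw [ht, show (2:ℝ) = ((2:ℕ):ℝ) by norm_num, Real.rpow_natCast,
        Real.norm_eq_abs, ← abs_pow, abs_of_nonneg (by positivity)]
    rwa [heq] at h1
  have holder := integral_mul_le_Lp_mul_Lq_of_nonneg conj
    (ae_of_all _ fun t => abs_nonneg (u' t)) (ae_of_all _ fun t => sq_nonneg (u' t))
    hmf hmg
  -- rewrite Hölder
  have hlhseq : (∫ t, |u' t| * u' t ^ 2) = ∫ t, |u' t| ^ 3 := by
    refine integral_congr_ae (ae_of_all _ fun t => ?_)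
    show |u' t| * u' t ^ 2 = |u' t| ^ 3
    rw [← sq_abs]; ring
  have hr1 : (∫ t, |u' t| ^ (2:ℝ)) = B := by
    rw [hB]
    refine integral_congr_ae (ae_of_all _ fun t => ?_)
    show |u' t| ^ (2:ℝ) = u' t ^ 2
    rw [show (2:ℝ) = ((2:ℕ):ℝ) by norm_num, Real.rpow_natCast, sq_abs]
  have hr2 : (∫ t, (u' t ^ 2) ^ (2:ℝ)) = D := by
    rw [hD]
    refine integral_congr_ae (ae_of_all _ fun t => ?_)
    show (u' t ^ 2) ^ (2:ℝ) = u' t ^ 4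
    rw [show (2:ℝ) = ((2:ℕ):ℝ) by norm_num, Real.rpow_natCast]
    ring
  rw [hlhseq, hr1, hr2] at holder
  have hBE : B ≤ E := by rw [hE']; linarith
  have hsqrt1 : B ^ (1/(2:ℝ)) = Real.sqrt B := (Real.sqrt_eq_rpow B).symm
  have hsqrt2 : D ^ (1/(2:ℝ)) = Real.sqrt D := (Real.sqrt_eq_rpow D).symm
  rw [hsqrt1, hsqrt2] at holder
  calc (∫ x, |u' x| ^ 3) ≤ Real.sqrt B * Real.sqrt D := holder
    _ ≤ Real.sqrt E * Real.sqrt (3 * (2 * E ^ 2 - F)) := by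
        apply mul_le_mul (Real.sqrt_le_sqrt hBE) (Real.sqrt_le_sqrt hDle)
          (Real.sqrt_nonneg _) (Real.sqrt_nonneg _)
    _ = Real.sqrt (E * (3 * (2 * E ^ 2 - F))) := (Real.sqrt_mul hE0 _).symm
    _ = Real.sqrt (3 * E * (2 * E ^ 2 - F)) := by congr 1; ring
end
end

section
/- Let μ be a finite nonnegative Borel measure on ℝ. Then for every β ∈ ℝ there exists a unique x = x(β) ∈ ℝ such that x + μ((−∞, x)) ≤ β ≤ x + μ((−∞, x]), and the resulting map β ↦ x(β) is nondecreasing and Lipschitz continuous with Lipschitz constant 1; indeed for β₁ < β₂ one has x(β₂) − x(β₁) + μ( (x(β₁), x(β₂)) ) ≤ β₂ − β₁. -/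
open MeasureTheory Set Filter
open scoped ENNReal Topology

noncomputable section

namespace GenInvAux

variable (μ : Measure ℝ) [IsFiniteMeasure μ]

/-- `f x = x + μ((−∞,x])`. -/
def f (x : ℝ) : ℝ := x + (μ (Iic x)).toReal

/-- `g x = x + μ((−∞,x))`. -/
def g (x : ℝ) : ℝ := x + (μ (Iio x)).toReal

lemma f_mono : Monotone (f μ) := fun a b h =>
  add_le_add h (ENNReal.toReal_mono (measure_ne_top μ _)
    (measure_mono (Iic_subset_Iic.2 h)))

lemma f_lt_g {a b : ℝ} (h : a < b) : f μ a < g μ b :=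
  add_lt_add_of_lt_of_le h (ENNReal.toReal_mono (measure_ne_top μ _)
    (measure_mono fun x hx => lt_of_le_of_lt hx h))

lemma g_le_f (x : ℝ) : g μ x ≤ f μ x :=
  add_le_add le_rfl (ENNReal.toReal_mono (measure_ne_top μ _)
    (measure_mono Iio_subset_Iic_self))

/-- The set whose sup defines `xm β`. -/
def S (β : ℝ) : Set ℝ := {x | f μ x ≤ β}

def xm (β : ℝ) : ℝ := sSup (S μ β)

lemma S_nonempty (β : ℝ) : (S μ β).Nonempty := by
  refine ⟨β - (μ Set.univ).toReal, ?_⟩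
  have : (μ (Iic (β - (μ Set.univ).toReal))).toReal ≤ (μ Set.univ).toReal :=
    ENNReal.toReal_mono (measure_ne_top μ _) (measure_mono (subset_univ _))
  simp only [S, f, Set.mem_setOf_eq]
  linarith

lemma S_bddAbove (β : ℝ) : BddAbove (S μ β) := by
  refine ⟨β, fun x hx => ?_⟩
  have : x + (μ (Iic x)).toReal ≤ β := hx
  have h0 : (0:ℝ) ≤ (μ (Iic x)).toReal := ENNReal.toReal_nonneg
  linarith

lemma g_xm_le (β : ℝ) : g μ (xm μ β) ≤ β := by
  set x := xm μ β with hx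
  -- every y < x belongs to S
  have hS : ∀ y, y < x → f μ y ≤ β := by
    intro y hy
    obtain ⟨z, hz, hyz⟩ := exists_lt_of_lt_csSup (S_nonempty μ β) hy
    exact le_trans (f_mono μ hyz.le) hz
  -- approximate Iio x from inside
  set c : ℕ → ℝ := fun n => x - 1 / (n + 1) with hc
  have hcx : ∀ n, c n < x := fun n => by
    have : (0:ℝ) < 1 / (n + 1) := by positivity
    simp only [hc]; linarith
  have hmono : Monotone fun n => Iic (c n) := by
    intro a b hab
    apply Iic_subset_Iic.2
    have : (1:ℝ) / (b + 1) ≤ 1 / (a + 1) := by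
      apply one_div_le_one_div_of_le (by positivity)
      exact_mod_cast add_le_add_left (Nat.cast_le.2 hab) 1
    simp only [hc]; linarith
  have hunion : (⋃ n, Iic (c n)) = Iio x := by
    ext y
    simp only [mem_iUnion, mem_Iic, mem_Iio]
    constructor
    · rintro ⟨n, hn⟩; exact lt_of_le_of_lt hn (hcx n)
    · intro hy
      obtain ⟨n, hn⟩ := exists_nat_one_div_lt (sub_pos.2 hy)
      exact ⟨n, by simp only [hc]; linarith⟩
  have htend : Tendsto (fun n => (μ (Iic (c n))).toReal) atTop
      (𝓝 ((μ (Iio x)).toReal)) := by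
    have := tendsto_measure_iUnion_atTop (μ := μ) hmono
    rw [hunion] at this
    exact (ENNReal.tendsto_toReal (measure_ne_top μ _)).comp this
  have htend' : Tendsto (fun n => β - c n) atTop (𝓝 (β - x)) := by
    have h1 : Tendsto (fun n : ℕ => 1 / ((n:ℝ) + 1)) atTop (𝓝 0) :=
      tendsto_one_div_add_atTop_nhds_zero_nat
    have : Tendsto (fun n : ℕ => β - x + 1 / ((n:ℝ) + 1)) atTop (𝓝 (β - x + 0)) :=
      tendsto_const_nhds.add h1
    simpa [hc, sub_sub_eq_add_sub, sub_add_eq_add_sub] using this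
  have hle : (μ (Iio x)).toReal ≤ β - x := by
    refine le_of_tendsto_of_tendsto' htend htend' fun n => ?_
    have := hS (c n) (hcx n)
    simp only [f] at this
    linarith
  simp only [g]; linarith

lemma le_f_xm (β : ℝ) : β ≤ f μ (xm μ β) := by
  set x := xm μ β with hx
  have hS : ∀ y, x < y → β ≤ f μ y := by
    intro y hy
    by_contra h
    push_neg at h
    exact absurd (le_csSup (S_bddAbove μ β) h.le) (not_le.2 hy)
  set c : ℕ → ℝ := fun n => x + 1 / (n + 1) with hc
  have hcx : ∀ n, x < c n := fun n => by
    have : (0:ℝ) < 1 / (n + 1) := by positivity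
    simp only [hc]; linarith
  have hanti : Antitone fun n => Iic (c n) := by
    intro a b hab
    apply Iic_subset_Iic.2
    have : (1:ℝ) / (b + 1) ≤ 1 / (a + 1) := by
      apply one_div_le_one_div_of_le (by positivity)
      exact_mod_cast add_le_add_left (Nat.cast_le.2 hab) 1
    simp only [hc]; linarith
  have hinter : (⋂ n, Iic (c n)) = Iic x := by
    ext y
    simp only [mem_iInter, mem_Iic]
    constructor
    · intro h
      by_contra hxy
      push_neg at hxy
      obtain ⟨n, hn⟩ := exists_nat_one_div_lt (sub_pos.2 hxy)
      have := h n
      simp only [hc] at this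
      linarith
    · intro h n
      exact le_trans h (hcx n).le
  have htend : Tendsto (fun n => (μ (Iic (c n))).toReal) atTop
      (𝓝 ((μ (Iic x)).toReal)) := by
    have := tendsto_measure_iInter_atTop (μ := μ)
      (fun n => (measurableSet_Iic).nullMeasurableSet) hanti ⟨0, measure_ne_top μ _⟩
    rw [hinter] at this
    exact (ENNReal.tendsto_toReal (measure_ne_top μ _)).comp this
  have htend' : Tendsto (fun n => c n + (μ (Iic (c n))).toReal) atTop
      (𝓝 (x + (μ (Iic x)).toReal)) := by
    have h1 : Tendsto (fun n : ℕ => 1 / ((n:ℝ) + 1)) atTop (𝓝 0) :=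
      tendsto_one_div_add_atTop_nhds_zero_nat
    have hcx' : Tendsto c atTop (𝓝 x) := by
      have : Tendsto (fun n : ℕ => x + 1 / ((n:ℝ) + 1)) atTop (𝓝 (x + 0)) :=
        tendsto_const_nhds.add h1
      simpa [hc] using this
    exact hcx'.add htend
  refine ge_of_tendsto htend' (Eventually.of_forall fun n => ?_)
  exact hS (c n) (hcx n)

lemma uniq (β y : ℝ) (h : g μ y ≤ β ∧ β ≤ f μ y) : y = xm μ β := by
  by_contra hne
  rcases lt_or_gt_of_ne hne with hlt | hgt
  · have := f_lt_g μ hlt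
    have h1 := g_xm_le μ β
    linarith [h.2]
  · have := f_lt_g μ hgt
    have h1 := le_f_xm μ β
    linarith [h.1]

lemma xm_mono : Monotone (xm μ) := by
  intro β₁ β₂ h
  by_contra hlt
  push_neg at hlt
  have := f_lt_g μ hlt
  have h1 := le_f_xm μ β₂
  have h2 := g_xm_le μ β₁
  linarith

lemma key (β₁ β₂ : ℝ) (h : β₁ < β₂) :
    xm μ β₂ - xm μ β₁ + (μ (Ioo (xm μ β₁) (xm μ β₂))).toReal ≤ β₂ - β₁ := by
  set a := xm μ β₁
  set b := xm μ β₂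
  have hab : a ≤ b := xm_mono μ h.le
  have h1 : g μ b ≤ β₂ := g_xm_le μ β₂
  have h2 : β₁ ≤ f μ a := le_f_xm μ β₁
  rcases eq_or_lt_of_le hab with heq | hlt
  · rw [← heq]
    simp only [Ioo_self, measure_empty, ENNReal.toReal_zero, sub_self, add_zero]
    linarith
  · have hsplit : μ (Iio b) = μ (Iic a) + μ (Ioo a b) := by
      rw [← measure_union _ measurableSet_Ioo]
      · congr 1
        rw [Iic_union_Ioo_eq_Iio hlt]
      · rw [Set.disjoint_left]
        intro x hx hx'
        exact absurd hx'.1 (not_lt.2 hx)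
    have : (μ (Iio b)).toReal = (μ (Iic a)).toReal + (μ (Ioo a b)).toReal := by
      rw [hsplit, ENNReal.toReal_add (measure_ne_top μ _) (measure_ne_top μ _)]
    simp only [g, f] at h1 h2
    linarith

lemma lip : LipschitzWith 1 (xm μ) := by
  refine LipschitzWith.of_dist_le_mul fun β₁ β₂ => ?_
  rw [Real.dist_eq, Real.dist_eq, NNReal.coe_one, one_mul]
  rcases lt_trichotomy β₁ β₂ with h | h | h
  · have hk := key μ β₁ β₂ h
    have hm := xm_mono μ h.le
    have h0 : (0:ℝ) ≤ (μ (Ioo (xm μ β₁) (xm μ β₂))).toReal := ENNReal.toReal_nonneg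
    rw [abs_of_nonpos (by linarith), abs_of_neg (by linarith)]
    linarith
  · simp [h]
  · have hk := key μ β₂ β₁ h
    have hm := xm_mono μ h.le
    have h0 : (0:ℝ) ≤ (μ (Ioo (xm μ β₂) (xm μ β₁))).toReal := ENNReal.toReal_nonneg
    rw [abs_of_nonneg (by linarith), abs_of_pos (by linarith)]
    linarith

end GenInvAux

/-- **The generalized inverse of `x ↦ x + μ((−∞,x])` is well defined and
`1`-Lipschitz.** Let `μ` be a finite nonnegative Borel measure on `ℝ`. Then for every
`β ∈ ℝ` there is a unique `x(β)` with `x + μ((−∞,x)) ≤ β ≤ x + μ((−∞,x])`, and the map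
`β ↦ x(β)` is nondecreasing and Lipschitz with constant `1`; indeed for `β₁ < β₂` one
has `x(β₂) − x(β₁) + μ((x(β₁), x(β₂))) ≤ β₂ − β₁`. -/
theorem generalized_inverse_lipschitz (μ : Measure ℝ) [IsFiniteMeasure μ] :
    ∃ xm : ℝ → ℝ,
      (∀ β : ℝ, xm β + (μ (Iio (xm β))).toReal ≤ β
        ∧ β ≤ xm β + (μ (Iic (xm β))).toReal) ∧
      (∀ β y : ℝ, (y + (μ (Iio y)).toReal ≤ β ∧ β ≤ y + (μ (Iic y)).toReal) →
        y = xm β) ∧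
      Monotone xm ∧ LipschitzWith 1 xm ∧
      (∀ β₁ β₂ : ℝ, β₁ < β₂ →
        xm β₂ - xm β₁ + (μ (Ioo (xm β₁) (xm β₂))).toReal ≤ β₂ - β₁) :=
  ⟨GenInvAux.xm μ,
    fun β => ⟨GenInvAux.g_xm_le μ β, GenInvAux.le_f_xm μ β⟩,
    fun β y h => GenInvAux.uniq μ β y h,
    GenInvAux.xm_mono μ, GenInvAux.lip μ, GenInvAux.key μ⟩
end
end
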